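/- Let μ be a stationary measure for a random walk as above which is not invariant under some generator, and set J(ω,x) = d(f_{ω₀}⁻¹)_*μ/dμ (x). Then h(μ) = −∫∫ log J(ω,x) dμ(x) dℙ(ω) is strictly positive (possibly +∞). -/

import Mathlib

open MeasureTheory

lemma auxEqOfLe {α : Type*} [MeasurableSpace α] {μ ν : Measure α}
    [IsProbabilityMeasure μ] [IsProbabilityMeasure ν] (h : μ ≤ ν) : μ = ν := by
  ext A hA
  refine le_antisymm (h A) ?_
  have h1 : ν A = 1 - ν Aᶜ := by
    rw [measure_compl hA (measure_ne_top _ _), measure_univ]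
    rw [ENNReal.sub_sub_cancel ENNReal.one_ne_top (prob_le_one)]
  have h2 : μ A = 1 - μ Aᶜ := by
    rw [measure_compl hA (measure_ne_top _ _), measure_univ]
    rw [ENNReal.sub_sub_cancel ENNReal.one_ne_top (prob_le_one)]
  rw [h1, h2]
  exact tsub_le_tsub_left (h Aᶜ) 1

lemma auxNonpos {α : Type*} [MeasurableSpace α] (μ ν : Measure α)
    [IsProbabilityMeasure μ] [IsProbabilityMeasure ν] (hac : μ ≪ ν)
    (hi : Integrable (fun x => Real.log ((ν.rnDeriv μ x).toReal)) μ) :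
    ∫ x, Real.log ((ν.rnDeriv μ x).toReal) ∂μ ≤ 0 := by
  have hpos : ∀ᵐ x ∂μ, 0 < (ν.rnDeriv μ x).toReal := by
    filter_upwards [Measure.rnDeriv_pos' hac, Measure.rnDeriv_lt_top ν μ] with x h1 h2
    exact ENNReal.toReal_pos h1.ne' h2.ne
  have hg_int : Integrable (fun x => (ν.rnDeriv μ x).toReal) μ :=
    Measure.integrable_toReal_rnDeriv
  have h1 : ∫ x, Real.log ((ν.rnDeriv μ x).toReal) ∂μ
      ≤ ∫ x, ((ν.rnDeriv μ x).toReal - 1) ∂μ := by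
    refine integral_mono_ae hi (hg_int.sub (integrable_const 1)) ?_
    filter_upwards [hpos] with x hx
    exact Real.log_le_sub_one_of_pos hx
  have h2 : ∫ x, ((ν.rnDeriv μ x).toReal - 1) ∂μ ≤ 0 := by
    rw [integral_sub hg_int (integrable_const 1), integral_const, probReal_univ]
    have h3 : ∫ x, (ν.rnDeriv μ x).toReal ∂μ ≤ (ν Set.univ).toReal := by
      rw [← setIntegral_univ]
      exact Measure.setIntegral_toReal_rnDeriv_le (measure_ne_top _ _)
    simp only [measure_univ, ENNReal.toReal_one, smul_eq_mul, mul_one] at h3 ⊢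
    linarith
  linarith

lemma auxNeg {α : Type*} [MeasurableSpace α] (μ ν : Measure α)
    [IsProbabilityMeasure μ] [IsProbabilityMeasure ν] (hac : μ ≪ ν)
    (hi : Integrable (fun x => Real.log ((ν.rnDeriv μ x).toReal)) μ)
    (hne : ν ≠ μ) :
    ∫ x, Real.log ((ν.rnDeriv μ x).toReal) ∂μ < 0 := by
  rcases lt_or_eq_of_le (auxNonpos μ ν hac hi) with h | h
  · exact h
  exfalso
  have hpos : ∀ᵐ x ∂μ, 0 < (ν.rnDeriv μ x).toReal := by
    filter_upwards [Measure.rnDeriv_pos' hac, Measure.rnDeriv_lt_top ν μ] with x h1 h2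
    exact ENNReal.toReal_pos h1.ne' h2.ne
  have hg_int : Integrable (fun x => (ν.rnDeriv μ x).toReal) μ :=
    Measure.integrable_toReal_rnDeriv
  set φ : α → ℝ := fun x => ((ν.rnDeriv μ x).toReal - 1) - Real.log ((ν.rnDeriv μ x).toReal)
    with hφ
  have hφ_int : Integrable φ μ := (hg_int.sub (integrable_const 1)).sub hi
  have hφ_nonneg : 0 ≤ᵐ[μ] φ := by
    filter_upwards [hpos] with x hx
    simpa [hφ] using Real.log_le_sub_one_of_pos hx
  have hg1 : Integrable (fun x => (ν.rnDeriv μ x).toReal - 1) μ :=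
    hg_int.sub (integrable_const 1)
  have hφ_le : ∫ x, φ x ∂μ ≤ 0 := by
    have he : ∫ x, φ x ∂μ
        = ∫ x, ((ν.rnDeriv μ x).toReal - 1) ∂μ - ∫ x, Real.log ((ν.rnDeriv μ x).toReal) ∂μ :=
      integral_sub hg1 hi
    rw [he, h, integral_sub hg_int (integrable_const 1), integral_const, probReal_univ]
    have h3 : ∫ x, (ν.rnDeriv μ x).toReal ∂μ ≤ (ν Set.univ).toReal := by
      rw [← setIntegral_univ]
      exact Measure.setIntegral_toReal_rnDeriv_le (measure_ne_top _ _)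
    simp only [measure_univ, ENNReal.toReal_one, smul_eq_mul, mul_one] at h3 ⊢
    linarith
  have hφ_zero : φ =ᵐ[μ] 0 := by
    rw [← integral_eq_zero_iff_of_nonneg_ae hφ_nonneg hφ_int]
    exact le_antisymm hφ_le (integral_nonneg_of_ae hφ_nonneg)
  have hone : (fun x => ν.rnDeriv μ x) =ᵐ[μ] (1 : α → ENNReal) := by
    filter_upwards [hφ_zero, hpos, Measure.rnDeriv_lt_top ν μ] with x h0 hx hlt
    have hx1 : (ν.rnDeriv μ x).toReal = 1 := by
      by_contra hne1
      have := Real.log_lt_sub_one_of_pos hx hne1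
      simp only [hφ, Pi.zero_apply] at h0
      linarith
    exact (ENNReal.toReal_eq_one_iff _).mp hx1
  have hμν : μ ≤ ν := by
    have h1 : μ.withDensity (ν.rnDeriv μ) = μ := by
      rw [withDensity_congr_ae hone, withDensity_one]
    calc μ = μ.withDensity (ν.rnDeriv μ) := h1.symm
    _ ≤ ν := Measure.withDensity_rnDeriv_le ν μ
  exact hne (auxEqOfLe hμν).symm

theorem stmt8 {G K : Type*} [Group G] [MetricSpace K] [CompactSpace K]
    [MeasurableSpace K] [BorelSpace K] [MulAction G K]
    (hcont : ∀ g : G, Continuous fun x : K => g • x)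
    (S : Finset G) (p : G → ℝ)
    (hp : ∀ s ∈ S, 0 < p s) (hsum : ∑ s ∈ S, p s = 1)
    (μ : Measure K) [IsProbabilityMeasure μ]
    (hstat : μ = ∑ s ∈ S, ENNReal.ofReal (p s) • Measure.map (fun x : K => s • x) μ)
    (hninv : ∃ s ∈ S, Measure.map (fun x : K => s • x) μ ≠ μ) :
    (∃ s ∈ S, ¬ Integrable
        (fun x => Real.log ((Measure.map (fun y : K => s⁻¹ • y) μ).rnDeriv μ x).toReal) μ) ∨
      0 < -∑ s ∈ S, p s *
        ∫ x, Real.log ((Measure.map (fun y : K => s⁻¹ • y) μ).rnDeriv μ x).toReal ∂μ := by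
  by_cases hint : ∀ s ∈ S, Integrable
      (fun x => Real.log ((Measure.map (fun y : K => s⁻¹ • y) μ).rnDeriv μ x).toReal) μ
  swap
  · left; push_neg at hint; exact hint
  right
  have hmeas : ∀ g : G, Measurable fun x : K => g • x := fun g => (hcont g).measurable
  have hprob : ∀ s : G, IsProbabilityMeasure (Measure.map (fun y : K => s⁻¹ • y) μ) :=
    fun s => Measure.isProbabilityMeasure_map (hmeas s⁻¹).aemeasurable
  have hcomp : ∀ s : G, ((fun y : K => s⁻¹ • y) ∘ fun x : K => s • x) = id :=
    fun s => funext fun x => by simp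
  have hcomp' : ∀ s : G, ((fun x : K => s • x) ∘ fun y : K => s⁻¹ • y) = id :=
    fun s => funext fun x => by simp
  have hac : ∀ s ∈ S, μ ≪ Measure.map (fun y : K => s⁻¹ • y) μ := by
    intro s hs
    have hle : ENNReal.ofReal (p s) • Measure.map (fun x : K => s • x) μ ≤ μ := by
      refine Measure.le_iff'.mpr fun A => ?_
      conv_rhs => rw [hstat]
      rw [Measure.finset_sum_apply]
      exact Finset.single_le_sum
        (f := fun t => (ENNReal.ofReal (p t) • Measure.map (fun x : K => t • x) μ) A)
        (fun i _ => zero_le) hs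
    have h1 := Measure.map_mono hle (hmeas s⁻¹)
    rw [Measure.map_smul, Measure.map_map (hmeas s⁻¹) (hmeas s), hcomp s,
      Measure.map_id] at h1
    refine Measure.AbsolutelyContinuous.mk fun A hA h0 => ?_
    have h2 := (Measure.le_iff'.mp h1) A
    rw [h0, Measure.smul_apply, smul_eq_mul, le_zero_iff, mul_eq_zero] at h2
    rcases h2 with h2 | h2
    · exact absurd h2 (by simp [ENNReal.ofReal_eq_zero, not_le, hp s hs])
    · exact h2
  obtain ⟨s₀, hs₀, hnivₒ⟩ := hninv
  have hne : Measure.map (fun y : K => s₀⁻¹ • y) μ ≠ μ := by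
    intro h
    apply hnivₒ
    have h1 := congrArg (Measure.map (fun x : K => s₀ • x)) h
    rw [Measure.map_map (hmeas s₀) (hmeas s₀⁻¹), hcomp' s₀, Measure.map_id] at h1
    exact h1.symm
  rw [neg_pos]
  have hsum0 : (0 : ℝ) = ∑ s ∈ S, (0 : ℝ) := by simp
  rw [hsum0]
  refine Finset.sum_lt_sum (fun i hi => ?_) ⟨s₀, hs₀, ?_⟩
  · haveI := hprob i
    have := auxNonpos μ (Measure.map (fun y : K => i⁻¹ • y) μ) (hac i hi) (hint i hi)
    exact mul_nonpos_of_nonneg_of_nonpos (hp i hi).le this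
  · haveI := hprob s₀
    have := auxNeg μ (Measure.map (fun y : K => s₀⁻¹ • y) μ) (hac s₀ hs₀) (hint s₀ hs₀) hne
    exact mul_neg_of_pos_of_neg (hp s₀ hs₀) this
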